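/- If the single leader of a noisy consensus system on a finite tree is moved from vertex u to an adjacent vertex v, the total variance changes by F_tot({v}) - F_tot({u}) = (1/2)(n_u - n_v), where n_u and n_v are the numbers of vertices in the components of T minus edge {u,v} containing u and v respectively; hence moving the leader toward the larger component strictly decreases total variance. -/

import Mathlib

open SimpleGraph Finset

/-- If every path from `x` to `v` passes through `u`, where `u ~ v`, then
`dist x v = dist x u + 1`. -/
lemma aux_dist {V : Type*} {G : SimpleGraph V} (hc : G.Connected)
    {u v x : V} (huv : G.Adj u v)
    (hx : ∀ q : G.Walk x v, q.IsPath → u ∈ q.support) :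
    G.dist x v = G.dist x u + 1 := by
  classical
  have h1 : G.dist u v = 1 := (SimpleGraph.dist_eq_one_iff_adj).2 huv
  have hle : G.dist x v ≤ G.dist x u + 1 := by
    have := hc.dist_triangle (u := x) (v := u) (w := v)
    omega
  have hge : G.dist x u + 1 ≤ G.dist x v := by
    obtain ⟨w, hw⟩ := (hc.preconnected x v).exists_walk_length_eq_dist
    set b := w.bypass with hb
    have hbp : b.IsPath := w.bypass_isPath
    have hub : u ∈ b.support := hx b hbp
    have hsplit := congr_arg SimpleGraph.Walk.length (b.take_spec hub)
    rw [SimpleGraph.Walk.length_append] at hsplit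
    have h2 : G.dist x u ≤ (b.takeUntil u hub).length := SimpleGraph.dist_le _
    have h3 : 1 ≤ (b.dropUntil u hub).length := by
      have := SimpleGraph.dist_le (b.dropUntil u hub)
      omega
    have h4 : b.length ≤ w.length := w.length_bypass_le
    omega
  omega

/-- Dichotomy: each vertex `x` either has all its paths to `v` through `u`
(and possesses a path to `u` avoiding `v`) or vice versa. -/
lemma aux_dichotomy {V : Type*} {G : SimpleGraph V} (hc : G.Connected)
    (hac : G.IsAcyclic) {u v : V} (huv : G.Adj u v) (x : V) :
    ((∀ q : G.Walk x v, q.IsPath → u ∈ q.support) ∧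
      ¬ (∀ q : G.Walk x u, q.IsPath → v ∈ q.support)) ∨
    ((¬ ∀ q : G.Walk x v, q.IsPath → u ∈ q.support) ∧
      (∀ q : G.Walk x u, q.IsPath → v ∈ q.support)) := by
  classical
  obtain ⟨w⟩ := hc.preconnected x v
  set p := w.bypass with hpdef
  have hp : p.IsPath := w.bypass_isPath
  by_cases hu : u ∈ p.support
  · left
    constructor
    · intro q hq
      have : (⟨q, hq⟩ : G.Path x v) = ⟨p, hp⟩ := hac.path_unique _ _
      have hqs : q = p := congr_arg Subtype.val this
      rw [hqs]; exact hu
    · push_neg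
      refine ⟨p.takeUntil u hu, hp.takeUntil hu, ?_⟩
      -- v is not in the support of the take-until part
      have hnd : p.support.Nodup := hp.support_nodup
      have hspec := p.take_spec hu
      have hsupp : p.support =
          (p.takeUntil u hu).support ++ (p.dropUntil u hu).support.tail := by
        rw [← SimpleGraph.Walk.support_append, hspec]
      have hvtail : v ∈ (p.dropUntil u hu).support.tail := by
        have hvmem : v ∈ (p.dropUntil u hu).support :=
          SimpleGraph.Walk.end_mem_support _
        have hcons := (p.dropUntil u hu).support_eq_cons
        rw [hcons] at hvmem
        rcases List.mem_cons.1 hvmem with h | h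
        · exact absurd h.symm huv.ne
        · exact h
      rw [hsupp] at hnd
      have hdisj := (List.nodup_append.1 hnd).2.2
      intro hvt
      exact hdisj v hvt v hvtail rfl
  · right
    have hq0 : (p.concat huv.symm).IsPath := by
      rw [SimpleGraph.Walk.isPath_def, SimpleGraph.Walk.support_concat]
      simp only [List.concat_eq_append, List.nodup_append, List.nodup_cons]
      refine ⟨hp.support_nodup, by simp, ?_⟩
      intro a ha b hb hab
      simp only [List.mem_singleton] at hb
      subst hb
      subst hab
      exact hu ha
    constructor
    · push_neg
      exact ⟨p, hp, hu⟩
    · intro q hq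
      have : (⟨q, hq⟩ : G.Path x u) = ⟨p.concat huv.symm, hq0⟩ :=
        hac.path_unique _ _
      have hqs : q = p.concat huv.symm := congr_arg Subtype.val this
      rw [hqs, SimpleGraph.Walk.support_concat]
      simp only [List.concat_eq_append, List.mem_append]
      exact Or.inl (SimpleGraph.Walk.end_mem_support p)

/-- Moving the single leader across an edge `{u,v}` of a tree changes the total
variance by `(1/2)(n_u - n_v)`, where `n_u`, `n_v` are the sizes of the two components
of the tree minus the edge; hence moving toward the larger component strictly
decreases the total variance. -/
theorem leader_move_total_variance_change {V : Type*} [Fintype V] [DecidableEq V]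
    (G : SimpleGraph V) (hT : G.Connected ∧ G.IsAcyclic)
    (u v : V) (huv : G.Adj u v)
    (nu nv : ℕ)
    (hnu : nu = Set.ncard {x : V | ∀ q : G.Walk x v, q.IsPath → u ∈ q.support})
    (hnv : nv = Set.ncard {x : V | ∀ q : G.Walk x u, q.IsPath → v ∈ q.support}) :
    ((1 : ℝ) / 2) * (∑ i ∈ Finset.univ.erase v, (G.dist i v : ℝ)) -
        (1 / 2) * (∑ i ∈ Finset.univ.erase u, (G.dist i u : ℝ))
      = (1 / 2) * ((nu : ℝ) - (nv : ℝ)) ∧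
    (nu < nv →
      (1 / 2) * (∑ i ∈ Finset.univ.erase v, (G.dist i v : ℝ)) <
        (1 / 2) * (∑ i ∈ Finset.univ.erase u, (G.dist i u : ℝ))) := by
  classical
  obtain ⟨hc, hac⟩ := hT
  set P : V → Prop := fun x => ∀ q : G.Walk x v, q.IsPath → u ∈ q.support with hP
  set Q : V → Prop := fun x => ∀ q : G.Walk x u, q.IsPath → v ∈ q.support with hQ
  have hdich := fun x => aux_dichotomy hc hac huv (x := x)
  -- sums over erase equal sums over univ
  have hev : ∑ i ∈ Finset.univ.erase v, (G.dist i v : ℝ)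
      = ∑ i ∈ Finset.univ, (G.dist i v : ℝ) := by
    apply Finset.sum_erase
    simp [SimpleGraph.dist_self]
  have heu : ∑ i ∈ Finset.univ.erase u, (G.dist i u : ℝ)
      = ∑ i ∈ Finset.univ, (G.dist i u : ℝ) := by
    apply Finset.sum_erase
    simp [SimpleGraph.dist_self]
  have hdiff : ∑ i ∈ Finset.univ, ((G.dist i v : ℝ) - (G.dist i u : ℝ))
      = ∑ i ∈ Finset.univ, (if P i then (1 : ℝ) else -1) := by
    apply Finset.sum_congr rfl
    intro i _
    rcases hdich i with ⟨hPi, _⟩ | ⟨hPi, hQi⟩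
    · rw [if_pos hPi, aux_dist hc huv hPi]
      push_cast; ring
    · rw [if_neg hPi, aux_dist hc huv.symm hQi]
      push_cast; ring
  -- identify the cardinalities
  have hnuc : nu = (Finset.univ.filter P).card := by
    rw [hnu, ← Set.ncard_coe_finset]
    congr 1
    ext x
    simp [hP]
  have hnvc : nv = (Finset.univ.filter (fun i => ¬ P i)).card := by
    rw [hnv, ← Set.ncard_coe_finset]
    congr 1
    ext x
    simp only [Finset.coe_filter, Set.mem_setOf_eq, Finset.mem_univ, true_and]
    constructor
    · intro hQx hPx
      rcases hdich x with ⟨_, hnQ⟩ | ⟨hnP, _⟩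
      · exact hnQ hQx
      · exact hnP hPx
    · intro hnP
      rcases hdich x with ⟨hPx, _⟩ | ⟨_, hQx⟩
      · exact absurd hPx hnP
      · exact hQx
  have hsum : ∑ i ∈ Finset.univ, (if P i then (1 : ℝ) else -1)
      = (nu : ℝ) - (nv : ℝ) := by
    rw [Finset.sum_ite, Finset.sum_const, Finset.sum_const, hnuc, hnvc]
    simp
    ring
  have hmain : ((1 : ℝ) / 2) * (∑ i ∈ Finset.univ.erase v, (G.dist i v : ℝ)) -
        (1 / 2) * (∑ i ∈ Finset.univ.erase u, (G.dist i u : ℝ))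
      = (1 / 2) * ((nu : ℝ) - (nv : ℝ)) := by
    have hcomb : ∑ i ∈ Finset.univ, ((G.dist i v : ℝ) - (G.dist i u : ℝ))
        = ∑ i ∈ Finset.univ, (G.dist i v : ℝ) - ∑ i ∈ Finset.univ, (G.dist i u : ℝ) :=
      Finset.sum_sub_distrib _ _
    rw [hev, heu]
    rw [hdiff, hsum] at hcomb
    linarith
  refine ⟨hmain, fun hlt => ?_⟩
  have : ((nu : ℝ) - nv) < 0 := by
    have : (nu : ℝ) < nv := by exact_mod_cast hlt
    linarith
  nlinarith [hmain]
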